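/- Let j ≥ 1 be an integer and let ξ, η ∈ ℝ³ be such that either (η lies in the support of χ_j^− and ξ − η lies in the support of χ_j^+) or (η lies in the support of χ_j^+ and ξ − η lies in the support of χ_j^−). Then −1 ≤ (ξ₂ − η₂)η₂ / (|ξ − η| |η|) ≤ −1/16. -/
import Mathlib


open MeasureTheory ENNReal Real Filter
open scoped RealInnerProductSpace

noncomputable section

/-- Physical/frequency space ℝ³ with the Euclidean norm. -/
abbrev R3 := EuclideanSpace ℝ (Fin 3)

/-- Vector values ℂ⁶ = ℂ³ × ℂ³ (velocity and micro-rotation components). -/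
abbrev C6 := (Fin 3 ⊕ Fin 3) → ℂ

/-- η lies in the support of χ_j^+, the cube {|ξ₁| ≤ 1, |ξ₂ − 2^j| ≤ 1, |ξ₃| ≤ 1}. -/
def InSuppP (j : ℤ) (η : R3) : Prop :=
  |η 0| ≤ 1 ∧ |η 1 - 2 ^ j| ≤ 1 ∧ |η 2| ≤ 1

/-- η lies in the support of χ_j^−, the cube {|ξ₁| ≤ 1, |ξ₂ + 2^j| ≤ 1, |ξ₃| ≤ 1}. -/
def InSuppM (j : ℤ) (η : R3) : Prop :=
  |η 0| ≤ 1 ∧ |η 1 + 2 ^ j| ≤ 1 ∧ |η 2| ≤ 1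

lemma norm_sq_R3 (x : R3) : ‖x‖ ^ 2 = (x 0) ^ 2 + (x 1) ^ 2 + (x 2) ^ 2 := by
  rw [EuclideanSpace.norm_eq, Real.sq_sqrt (by positivity)]
  simp [Fin.sum_univ_three, sq_abs]

lemma key_scalar (t A B n m : ℝ) (ht : 2 ≤ t)
    (hA1 : t - 1 ≤ A) (hA2 : A ≤ t + 1)
    (hB1 : -(t + 1) ≤ B) (hB2 : B ≤ -(t - 1))
    (hn : A ≤ n) (hm : -B ≤ m)
    (hn2 : n ^ 2 ≤ A ^ 2 + 2) (hm2 : m ^ 2 ≤ B ^ 2 + 2) :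
    -1 ≤ A * B / (n * m) ∧ A * B / (n * m) ≤ -(1 / 16) := by
  have hn0 : 1 ≤ n := by linarith
  have hm0 : 1 ≤ m := by linarith
  have hnm : 0 < n * m := by nlinarith
  constructor
  · rw [le_div_iff₀ hnm]
    nlinarith [mul_le_mul hn hm (by linarith) (by linarith)]
  · rw [div_le_iff₀ hnm]
    have hsq : (n * m) ^ 2 ≤ (A ^ 2 + 2) * (B ^ 2 + 2) := by
      calc (n * m) ^ 2 = n ^ 2 * m ^ 2 := by ring
        _ ≤ (A ^ 2 + 2) * (B ^ 2 + 2) := by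
            apply mul_le_mul hn2 hm2 (sq_nonneg m) (by positivity)
    have hA : 1 ≤ A := by linarith
    have hB : 1 ≤ -B := by linarith
    have hq : 1 ≤ A * (-B) := one_le_mul_of_one_le_of_one_le hA hB
    have hA2 : 1 ≤ A ^ 2 := by nlinarith
    have hB2 : 1 ≤ B ^ 2 := by nlinarith
    have h9 : (A ^ 2 + 2) * (B ^ 2 + 2) ≤ 9 * (A * (-B)) ^ 2 := by nlinarith
    have h3 : n * m ≤ 3 * (A * (-B)) := by nlinarith
    linarith

/-- For an integer j ≥ 1, if η ∈ supp χ_j^− and ξ − η ∈ supp χ_j^+ (or with the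
roles of + and − exchanged), then −1 ≤ (ξ₂ − η₂)η₂/(|ξ − η||η|) ≤ −1/16. -/
theorem interaction_sign_bound (j : ℤ) (hj : 1 ≤ j) (ξ η : R3)
    (h : (InSuppM j η ∧ InSuppP j (ξ - η)) ∨ (InSuppP j η ∧ InSuppM j (ξ - η))) :
    -1 ≤ (ξ 1 - η 1) * η 1 / (‖ξ - η‖ * ‖η‖) ∧
      (ξ 1 - η 1) * η 1 / (‖ξ - η‖ * ‖η‖) ≤ -(1 / 16) := by
  set t : ℝ := 2 ^ j with ht_def
  have ht : 2 ≤ t := by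
    have : (2 : ℝ) ^ (1 : ℤ) ≤ 2 ^ j := zpow_le_zpow_right₀ one_le_two hj
    simpa using this
  have hsub : (ξ - η) 1 = ξ 1 - η 1 := rfl
  -- norm square bounds
  have nsq : ∀ x : R3, |x 0| ≤ 1 → |x 2| ≤ 1 → ‖x‖ ^ 2 ≤ (x 1) ^ 2 + 2 := by
    intro x h0 h2
    have h0' : (x 0) ^ 2 ≤ 1 := by nlinarith [abs_nonneg (x 0), sq_abs (x 0)]
    have h2' : (x 2) ^ 2 ≤ 1 := by nlinarith [abs_nonneg (x 2), sq_abs (x 2)]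
    rw [norm_sq_R3]; linarith
  have coord : ∀ x : R3, 0 ≤ x 1 → x 1 ≤ ‖x‖ := by
    intro x hx
    have := norm_sq_R3 x
    nlinarith [norm_nonneg x, sq_nonneg (x 0), sq_nonneg (x 2)]
  have coord' : ∀ x : R3, x 1 ≤ 0 → -(x 1) ≤ ‖x‖ := by
    intro x hx
    have := norm_sq_R3 x
    nlinarith [norm_nonneg x, sq_nonneg (x 0), sq_nonneg (x 2)]
  rcases h with ⟨⟨h0, h1, h2⟩, ⟨g0, g1, g2⟩⟩ | ⟨⟨h0, h1, h2⟩, ⟨g0, g1, g2⟩⟩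
  · -- η ∈ supp⁻ : η 1 ≈ -t ; ξ-η ∈ supp⁺ : (ξ-η) 1 ≈ t
    rw [hsub] at g1
    rw [abs_le] at h1 g1
    have hA1 : t - 1 ≤ ξ 1 - η 1 := by linarith [g1.1]
    have hA2 : ξ 1 - η 1 ≤ t + 1 := by linarith [g1.2]
    have hB1 : -(t + 1) ≤ η 1 := by linarith [h1.1]
    have hB2 : η 1 ≤ -(t - 1) := by linarith [h1.2]
    have hn : ξ 1 - η 1 ≤ ‖ξ - η‖ := by
      have := coord (ξ - η) (by rw [hsub]; linarith)
      rwa [hsub] at this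
    have hm : -(η 1) ≤ ‖η‖ := coord' η (by linarith)
    have hn2 : ‖ξ - η‖ ^ 2 ≤ (ξ 1 - η 1) ^ 2 + 2 := by
      have := nsq (ξ - η) g0 g2
      rwa [hsub] at this
    have hm2 : ‖η‖ ^ 2 ≤ (η 1) ^ 2 + 2 := nsq η h0 h2
    exact key_scalar t (ξ 1 - η 1) (η 1) ‖ξ - η‖ ‖η‖ ht hA1 hA2 hB1 hB2 hn hm hn2 hm2
  · -- η ∈ supp⁺ : η 1 ≈ t ; ξ-η ∈ supp⁻ : (ξ-η) 1 ≈ -t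
    rw [hsub] at g1
    rw [abs_le] at h1 g1
    have hA1 : t - 1 ≤ η 1 := by linarith [h1.1]
    have hA2 : η 1 ≤ t + 1 := by linarith [h1.2]
    have hB1 : -(t + 1) ≤ ξ 1 - η 1 := by linarith [g1.1]
    have hB2 : ξ 1 - η 1 ≤ -(t - 1) := by linarith [g1.2]
    have hn : η 1 ≤ ‖η‖ := coord η (by linarith)
    have hm : -(ξ 1 - η 1) ≤ ‖ξ - η‖ := by
      have := coord' (ξ - η) (by rw [hsub]; linarith)
      rwa [hsub] at this
    have hn2 : ‖η‖ ^ 2 ≤ (η 1) ^ 2 + 2 := nsq η h0 h2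
    have hm2 : ‖ξ - η‖ ^ 2 ≤ (ξ 1 - η 1) ^ 2 + 2 := by
      have := nsq (ξ - η) g0 g2
      rwa [hsub] at this
    have := key_scalar t (η 1) (ξ 1 - η 1) ‖η‖ ‖ξ - η‖ ht hA1 hA2 hB1 hB2 hn hm hn2 hm2
    rwa [mul_comm (η 1), mul_comm ‖η‖] at this
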